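/- For φ(s;α) = 1 − 1/(1 + 10 α s), C_v(s) = 0.5 s, and K > 0, let s†(α) = min(1, max(0, √(K/(5α)) − 1/(10α))) for α > 0. Then the map α ↦ φ(s†(α); α) is non-decreasing on (0,∞). In particular, in the interior regime where 0 < s†(α) < 1, α·s†(α) = √(αK/5) − 0.1, which is strictly increasing in α. -/

import Mathlib

lemma key_sqrt (K α : ℝ) (hK : 0 < K) (hα : 0 < α) :
    α * Real.sqrt (K / (5 * α)) = Real.sqrt (α * K / 5) := by
  rw [← Real.sqrt_sq hα.le, ← Real.sqrt_mul (by positivity)]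
  congr 1
  field_simp
  ring_nf
  rw [Real.sq_sqrt (by positivity)]

lemma key_mul (K α : ℝ) (hK : 0 < K) (hα : 0 < α) :
    α * min 1 (max 0 (Real.sqrt (K / (5 * α)) - 1 / (10 * α)))
      = min α (max 0 (Real.sqrt (α * K / 5) - 0.1)) := by
  rw [mul_min_of_nonneg _ _ hα.le, mul_max_of_nonneg _ _ hα.le, mul_sub,
    key_sqrt K α hK hα, mul_one, mul_zero,
    show α * (1 / (10 * α)) = 0.1 by rw [mul_one_div, div_eq_iff (by positivity : (10:ℝ)*α ≠ 0)]; ring]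

/-- For `φ(s;α)=1−1/(1+10αs)`, cost `0.5s`, and `K > 0`, with
`s†(α)=min(1, max(0, √(K/(5α)) − 1/(10α)))`, the map `α ↦ φ(s†(α);α)` is
non-decreasing on `(0,∞)`; in the interior regime `αs†(α) = √(αK/5) − 0.1`,
which is strictly increasing in `α`. -/
theorem stmt_10 (K : ℝ) (hK : 0 < K) :
    (∀ α₁ α₂ : ℝ, 0 < α₁ → α₁ ≤ α₂ →
      1 - 1 / (1 + 10 * α₁ * min 1 (max 0 (Real.sqrt (K / (5 * α₁)) - 1 / (10 * α₁))))
        ≤ 1 - 1 / (1 + 10 * α₂ * min 1 (max 0 (Real.sqrt (K / (5 * α₂)) - 1 / (10 * α₂))))) ∧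
    (∀ α : ℝ, 0 < α →
      0 < Real.sqrt (K / (5 * α)) - 1 / (10 * α) →
      Real.sqrt (K / (5 * α)) - 1 / (10 * α) < 1 →
      α * (Real.sqrt (K / (5 * α)) - 1 / (10 * α)) = Real.sqrt (α * K / 5) - 0.1) ∧
    (∀ α₁ α₂ : ℝ, 0 < α₁ → α₁ < α₂ →
      Real.sqrt (α₁ * K / 5) - 0.1 < Real.sqrt (α₂ * K / 5) - 0.1) := by
  refine ⟨?_, ?_, ?_⟩
  · intro α₁ α₂ h1 h12
    have h2 : 0 < α₂ := lt_of_lt_of_le h1 h12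
    have e1 := key_mul K α₁ hK h1
    have e2 := key_mul K α₂ hK h2
    rw [mul_assoc, mul_assoc, e1, e2]
    set x₁ := min α₁ (max 0 (Real.sqrt (α₁ * K / 5) - 0.1)) with hx1
    set x₂ := min α₂ (max 0 (Real.sqrt (α₂ * K / 5) - 0.1)) with hx2
    have hx1n : 0 ≤ x₁ := le_min h1.le (le_max_left _ _)
    have hle : x₁ ≤ x₂ := by
      apply min_le_min h12
      apply max_le_max le_rfl
      exact sub_le_sub_right (Real.sqrt_le_sqrt (by nlinarith)) _
    have hp1 : (0:ℝ) < 1 + 10 * x₁ := by linarith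
    have : 1 / (1 + 10 * x₂) ≤ 1 / (1 + 10 * x₁) :=
      one_div_le_one_div_of_le hp1 (by linarith)
    linarith
  · intro α hα _ _
    rw [mul_sub, key_sqrt K α hK hα,
      show α * (1 / (10 * α)) = 0.1 by rw [mul_one_div, div_eq_iff (by positivity : (10:ℝ)*α ≠ 0)]; ring]
  · intro α₁ α₂ h1 h12
    have : Real.sqrt (α₁ * K / 5) < Real.sqrt (α₂ * K / 5) :=
      Real.sqrt_lt_sqrt (by positivity) (by nlinarith)
    linarith
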